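/- For n ≥ 4, define an n × n matrix M by M_{i,j} = 1 if j − i ≡ 0 or 1 (mod n), M_{i,j} = −1 if j − i ≡ 2 or 3 (mod n), and M_{i,j} = 0 otherwise. Let v_1, ..., v_n be the rows of M. Then the zero vector is a tropical Fermat-Weber point of v_1, ..., v_n, and any tropical Fermat-Weber point a of v_1, ..., v_n satisfies a_1 = a_2 = ... = a_n (i.e., a = 0 in R^n / R·1). -/

import Mathlib

noncomputable def dtr {n : ℕ} [NeZero n] (u v : Fin n → ℝ) : ℝ :=
  Finset.univ.sup' Finset.univ_nonempty
    (fun p : Fin n × Fin n => |u p.1 - u p.2 - v p.1 + v p.2|)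

open Fin.NatCast

private lemma off_lemma (n i r : ℕ) (hi : i < n) (hr : r < n) :
    ((i + r) % n + n - i) % n = r := by
  rcases lt_or_ge (i + r) n with h | h
  · rw [Nat.mod_eq_of_lt h]
    have e : i + r + n - i = r + n := by omega
    rw [e, Nat.add_mod_right, Nat.mod_eq_of_lt hr]
  · have e1 : (i + r) % n = i + r - n := by
      rw [Nat.mod_eq_sub_mod h, Nat.mod_eq_of_lt (by omega)]
    rw [e1]
    have e2 : i + r - n + n - i = r := by omega
    rw [e2, Nat.mod_eq_of_lt hr]

private lemma val_add_cast {n : ℕ} [NeZero n] (i : Fin n) (r : ℕ) :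
    (i + (r : Fin n)).val = (i.val + r) % n := by
  simp [Fin.val_add, Fin.val_natCast, Nat.add_mod]

private lemma dtr_ge {n : ℕ} [NeZero n] (u v : Fin n → ℝ) (p q : Fin n) :
    |u p - u q - v p + v q| ≤ dtr u v :=
  Finset.le_sup' (f := fun p : Fin n × Fin n => |u p.1 - u p.2 - v p.1 + v p.2|)
    (Finset.mem_univ (p, q))

theorem stmt12 {n : ℕ} [NeZero n] (hn : 4 ≤ n)
    (M : Fin n → Fin n → ℝ)
    (hM : ∀ i j : Fin n,
      M i j =
        if (j.val + n - i.val) % n = 0 ∨ (j.val + n - i.val) % n = 1 then 1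
        else if (j.val + n - i.val) % n = 2 ∨ (j.val + n - i.val) % n = 3 then -1
        else 0) :
    (∀ w : Fin n → ℝ, ∑ i, dtr 0 (M i) ≤ ∑ i, dtr w (M i)) ∧
    (∀ a : Fin n → ℝ,
      (∀ w : Fin n → ℝ, ∑ i, dtr a (M i) ≤ ∑ i, dtr w (M i)) →
      ∀ i j : Fin n, a i = a j) := by
  -- values of M at offsets
  have Moff : ∀ (i : Fin n) (r : ℕ), r < n →
      M i (i + (r : ℕ)) =
        if r = 0 ∨ r = 1 then 1 else if r = 2 ∨ r = 3 then -1 else 0 := by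
    intro i r hr
    rw [hM]
    rw [show ((i + (r : Fin n)).val + n - i.val) % n = r by
      rw [val_add_cast]; exact off_lemma n i.val r i.isLt hr]
  set c1 : Fin n := ((1 : ℕ) : Fin n) with hc1
  set c2 : Fin n := ((2 : ℕ) : Fin n) with hc2
  set c3 : Fin n := ((3 : ℕ) : Fin n) with hc3
  have hM1 : ∀ i : Fin n, M i (i + c1) = 1 := by
    intro i; rw [hc1, Moff i 1 (by omega)]; norm_num
  have hM2 : ∀ i : Fin n, M i (i + c2) = -1 := by
    intro i; rw [hc2, Moff i 2 (by omega)]; norm_num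
  have hM3 : ∀ i : Fin n, M i (i + c3) = -1 := by
    intro i; rw [hc3, Moff i 3 (by omega)]; norm_num
  have hM0 : ∀ i : Fin n, M i i = 1 := by
    intro i
    have := Moff i 0 (by omega)
    simpa using this
  -- shift-invariance of sums
  have sum_shift : ∀ (w : Fin n → ℝ) (c : Fin n), ∑ i, w (i + c) = ∑ i, w i :=
    fun w c => Fintype.sum_equiv (Equiv.addRight c) _ _ (fun _ => rfl)
  -- key per-row lower bounds
  have key1 : ∀ (w : Fin n → ℝ) (i : Fin n),
      2 - w (i + c1) + w (i + c3) ≤ dtr w (M i) := by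
    intro w i
    have h := dtr_ge w (M i) (i + c1) (i + c3)
    rw [hM1 i, hM3 i] at h
    have h2 := neg_abs_le (w (i + c1) - w (i + c3) - 1 + -1)
    linarith
  have keyA : ∀ (w : Fin n → ℝ) (i : Fin n),
      2 - w (i + c1) + w (i + c2) ≤ dtr w (M i) := by
    intro w i
    have h := dtr_ge w (M i) (i + c1) (i + c2)
    rw [hM1 i, hM2 i] at h
    have h2 := neg_abs_le (w (i + c1) - w (i + c2) - 1 + -1)
    linarith
  have keyB : ∀ (w : Fin n → ℝ) (i : Fin n),
      2 - w i + w (i + c3) ≤ dtr w (M i) := by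
    intro w i
    have h := dtr_ge w (M i) i (i + c3)
    rw [hM0 i, hM3 i] at h
    have h2 := neg_abs_le (w i - w (i + c3) - 1 + -1)
    linarith
  -- sum of the telescoping lower bound equals 2n
  have sum_lb : ∀ w : Fin n → ℝ,
      ∑ i, (2 - w (i + c1) + w (i + c3)) = 2 * n := by
    intro w
    rw [Finset.sum_add_distrib, Finset.sum_sub_distrib, sum_shift w c1, sum_shift w c3]
    simp [Finset.sum_const, Finset.card_univ]
    ring
  have lower : ∀ w : Fin n → ℝ, (2 * n : ℝ) ≤ ∑ i, dtr w (M i) := by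
    intro w
    rw [← sum_lb w]
    exact Finset.sum_le_sum fun i _ => key1 w i
  -- upper bound for 0
  have absM : ∀ i j : Fin n, |M i j| ≤ 1 := by
    intro i j; rw [hM i j]
    split_ifs <;> norm_num
  have upper : ∑ i, dtr 0 (M i) ≤ 2 * n := by
    have h1 : ∀ i : Fin n, dtr 0 (M i) ≤ 2 := by
      intro i
      refine Finset.sup'_le _ _ fun p _ => ?_
      have h2 := absM i p.1
      have h3 := absM i p.2
      have h4 := abs_sub (M i p.2) (M i p.1)
      have h5 : |(0 : Fin n → ℝ) p.1 - (0 : Fin n → ℝ) p.2 - M i p.1 + M i p.2|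
          = |M i p.2 - M i p.1| := by norm_num; ring_nf
      rw [h5]
      linarith
    calc ∑ i, dtr 0 (M i) ≤ ∑ _i : Fin n, (2:ℝ) := Finset.sum_le_sum fun i _ => h1 i
      _ = 2 * n := by simp [Finset.sum_const, Finset.card_univ]; ring
  constructor
  · intro w; exact le_trans upper (lower w)
  · intro a ha
    have hA : ∑ i, dtr a (M i) = 2 * n :=
      le_antisymm (le_trans (ha 0) upper) (lower a)
    -- each row inequality is tight
    have heq : ∀ i : Fin n, 2 - a (i + c1) + a (i + c3) = dtr a (M i) := by
      have hsum : ∑ i, (2 - a (i + c1) + a (i + c3)) = ∑ i, dtr a (M i) := by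
        rw [hA, sum_lb a]
      have := (Finset.sum_eq_sum_iff_of_le (fun i _ => key1 a i)).mp hsum
      exact fun i => this i (Finset.mem_univ i)
    -- from keyA : a (i+2) ≤ a (i+3) for all i
    have h23 : ∀ i : Fin n, a (i + c2) ≤ a (i + c3) := by
      intro i
      have h := keyA a i
      rw [← heq i] at h
      linarith
    -- from keyB : a (i+1) ≤ a i for all i
    have h10 : ∀ i : Fin n, a (i + c1) ≤ a i := by
      intro i
      have h := keyB a i
      rw [← heq i] at h
      linarith
    have hc : c3 = c2 + c1 := by rw [hc1, hc2, hc3, ← Nat.cast_add]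
    -- step : a j = a (j + 1)
    have step : ∀ j : Fin n, a j = a (j + c1) := by
      intro j
      have h := h23 (j - c2)
      rw [sub_add_cancel, hc, show j - c2 + (c2 + c1) = j + c1 by abel] at h
      exact le_antisymm h (h10 j)
    -- iterate
    have aux : ∀ (k : ℕ) (i : Fin n), a i = a (i + (k : Fin n)) := by
      intro k
      induction k with
      | zero => intro i; simp
      | succ m ih =>
        intro i
        rw [show ((m + 1 : ℕ) : Fin n) = (m : Fin n) + c1 by rw [hc1]; push_cast; ring,
          ← add_assoc]
        rw [ih i]
        exact step (i + (m : Fin n))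
    intro i j
    have := aux (j - i).val i
    rwa [Fin.cast_val_eq_self (j - i), add_sub_cancel] at this
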